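/- Let n ≥ ks and let F ⊆ 2^[n] be a family of k-element sets with no s pairwise disjoint members. If n = ks + t with t ≥ 0, then the number of k-element subsets of [n] NOT in F is at least (1 + t/k)·C(n−1, k−1). -/

import Mathlib

open Finset
open Fin.NatCast

section Defs
variable (n k : ℕ) [NeZero n]

/-- The window of `k` consecutive positions starting at `i` on the cycle `Fin n`. -/
def win (i : Fin n) : Finset (Fin n) := (Finset.range k).image fun j : ℕ => i + (j : Fin n)

/-- The arc of a cyclic order `σ` starting at `i`, as a set of elements of `[n] = Icc 1 n`. -/
def arcs (σ : Fin n ≃ Fin n) (i : Fin n) : Finset ℕ := (win n k i).image fun x => (σ x : ℕ) + 1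

end Defs

section Props
variable {n k : ℕ} [NeZero n]

lemma win_natCast (u : ℕ) : win n k ((u : Fin n)) = (Finset.range k).image fun j => ((u + j : ℕ) : Fin n) := by
  unfold win
  apply Finset.image_congr
  intro j _
  push_cast
  rfl

lemma win_disjoint (u v : ℕ) (huv : u + k ≤ v) (hvu : v + k ≤ u + n) :
    Disjoint (win n k ((u : Fin n))) (win n k ((v : Fin n))) := by
  have hn' : 0 < n := Nat.pos_of_ne_zero (NeZero.ne n)
  rw [Finset.disjoint_left]
  intro x hx1 hx2
  rw [win_natCast, Finset.mem_image] at hx1 hx2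
  obtain ⟨a, ha, hax⟩ := hx1
  obtain ⟨b, hb, hbx⟩ := hx2
  rw [Finset.mem_range] at ha hb
  have heq : ((u + a : ℕ) : Fin n) = ((v + b : ℕ) : Fin n) := by rw [hax, hbx]
  have hval : (u + a) % n = (v + b) % n := by
    have h := congrArg Fin.val heq
    rwa [Fin.val_natCast, Fin.val_natCast] at h
  -- two congruent naturals in an interval of length < n are equal
  have e1 : n * ((u + a) / n) + (u + a) % n = u + a := Nat.div_add_mod _ _
  have e2 : n * ((v + b) / n) + (v + b) % n = v + b := Nat.div_add_mod _ _
  have hlt : u + a < v + b := by omega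
  have hq : (u + a) / n < (v + b) / n := by
    by_contra hq
    push_neg at hq
    have h3 : n * ((v + b) / n) ≤ n * ((u + a) / n) := Nat.mul_le_mul_left _ hq
    omega
  have h4 : n * ((u + a) / n) + n ≤ n * ((v + b) / n) := by
    have h5 : (u + a) / n + 1 ≤ (v + b) / n := hq
    have h6 : n * ((u + a) / n + 1) ≤ n * ((v + b) / n) := Nat.mul_le_mul_left _ h5
    have h7 : n * ((u + a) / n + 1) = n * ((u + a) / n) + n := by ring
    omega
  omega

lemma card_win (hk : k ≤ n) (i : Fin n) : (win n k i).card = k := by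
  have hn' : 0 < n := Nat.pos_of_ne_zero (NeZero.ne n)
  rw [win, Finset.card_image_of_injOn, Finset.card_range]
  intro a ha b hb hab
  simp only [Finset.coe_range, Set.mem_Iio] at ha hb
  have : (a : Fin n) = (b : Fin n) := by
    have := add_left_cancel hab
    exact this
  have := congrArg Fin.val this
  rwa [Fin.val_natCast, Fin.val_natCast, Nat.mod_eq_of_lt (by omega), Nat.mod_eq_of_lt (by omega)] at this

lemma win_nonempty (hk : 1 ≤ k) (i : Fin n) : (win n k i).Nonempty :=
  ⟨i + ((0 : ℕ) : Fin n), Finset.mem_image.mpr ⟨0, Finset.mem_range.mpr hk, rfl⟩⟩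

lemma card_arcs (hk : k ≤ n) (σ : Fin n ≃ Fin n) (i : Fin n) : (arcs n k σ i).card = k := by
  rw [arcs, Finset.card_image_of_injOn, card_win hk]
  intro a _ b _ hab
  have hab' : (σ a : ℕ) + 1 = (σ b : ℕ) + 1 := hab
  exact σ.injective (Fin.ext (by omega))

lemma arcs_mem_powersetCard (hk : k ≤ n) (σ : Fin n ≃ Fin n) (i : Fin n) :
    arcs n k σ i ∈ (Finset.Icc 1 n).powersetCard k := by
  rw [Finset.mem_powersetCard]
  refine ⟨?_, card_arcs hk σ i⟩
  intro x hx
  rw [arcs, Finset.mem_image] at hx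
  obtain ⟨z, _, hz⟩ := hx
  have := (σ z).isLt
  rw [Finset.mem_Icc]
  omega

end Props

open Finset

lemma strictMono_gap {m : ℕ} (g : Fin m → ℕ) (hg : StrictMono g) :
    ∀ (d : ℕ) (i j : Fin m), (j : ℕ) = (i : ℕ) + d → g i + d ≤ g j := by
  intro d
  induction d with
  | zero =>
    intro i j h
    have hij : i = j := Fin.ext (by omega)
    rw [hij]; omega
  | succ d ih =>
    intro i j h
    have hjm : (i : ℕ) + d < m := by have := j.isLt; omega
    have h1 := ih i ⟨(i : ℕ) + d, hjm⟩ rfl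
    have hlt : (⟨(i : ℕ) + d, hjm⟩ : Fin m) < j := by
      rw [Fin.lt_def]; show (i : ℕ) + d < (j : ℕ); omega
    have h2 : g ⟨(i : ℕ) + d, hjm⟩ < g j := hg hlt
    omega

lemma cyclic_select (n k s t : ℕ) (hk : 1 ≤ k) (hs : 1 ≤ s) (hn : n = k * s + t)
    (B : Finset (Fin n)) (hB : B.card + 1 ≤ k + t) :
    ∃ y : ℕ → ℕ, (∀ j, j < s → y j < n) ∧
      (∀ i j, i < j → j < s → y i + k ≤ y j) ∧
      (y (s - 1) + k ≤ y 0 + n) ∧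
      (∀ j, j < s →
        (haveI : NeZero n := ⟨by have := Nat.mul_pos hk hs; omega⟩
         ((y j : Fin n)) ∉ B)) := by
  haveI : NeZero n := ⟨by have := Nat.mul_pos hk hs; omega⟩
  have hm : 0 < k * s := Nat.mul_pos hk hs
  have hn' : 0 < n := by omega
  obtain ⟨D, hDcard, hBD⟩ : ∃ D : Finset (Fin n), D.card = t ∧ (B \ D).card + 1 ≤ k := by
    rcases le_total t B.card with h | h
    · obtain ⟨D, hDB, hDc⟩ := Finset.exists_subset_card_eq h
      refine ⟨D, hDc, ?_⟩
      have := Finset.card_sdiff_of_subset hDB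
      omega
    · obtain ⟨D, hBD, hDc⟩ := Finset.exists_superset_card_eq h
        (by simp only [Fintype.card_fin]; omega)
      refine ⟨D, hDc, ?_⟩
      have : B \ D = ∅ := Finset.sdiff_eq_empty_iff_subset.mpr hBD
      rw [this]; simpa using hk
  have hCcard : (Dᶜ : Finset (Fin n)).card = k * s := by
    rw [Finset.card_compl, hDcard, Fintype.card_fin]; omega
  let e := (Dᶜ : Finset (Fin n)).orderIsoOfFin hCcard
  let g : Fin (k * s) → ℕ := fun i => ((e i : Fin n) : ℕ)
  have hgmono : StrictMono g := fun a b hab => e.strictMono hab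
  have hglt : ∀ i, g i < n := fun i => (e i : Fin n).isLt
  have hB2card : (univ.filter (fun i : Fin (k*s) => (e i : Fin n) ∈ B)).card + 1 ≤ k := by
    have h1 : (univ.filter (fun i : Fin (k*s) => (e i : Fin n) ∈ B)).card ≤ (B \ D).card := by
      apply Finset.card_le_card_of_injOn (fun i => (e i : Fin n))
      · intro i hi
        rw [Finset.mem_coe, Finset.mem_filter] at hi
        have hC : (e i : Fin n) ∈ (Dᶜ : Finset (Fin n)) := (e i).2
        rw [Finset.mem_compl] at hC
        exact Finset.mem_coe.mpr (Finset.mem_sdiff.mpr ⟨hi.2, hC⟩)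
      · exact fun a _ b _ hab => e.injective (Subtype.ext hab)
    omega
  obtain ⟨a, ha_k, ha⟩ : ∃ a, a < k ∧
      ∀ i ∈ univ.filter (fun i : Fin (k*s) => (e i : Fin n) ∈ B), (i : ℕ) % k ≠ a := by
    have h1 : ((univ.filter (fun i : Fin (k*s) => (e i : Fin n) ∈ B)).image
        (fun i : Fin (k*s) => (i : ℕ) % k)).card < (Finset.range k).card := by
      have h2 := Finset.card_image_le (s := univ.filter (fun i : Fin (k*s) => (e i : Fin n) ∈ B))
        (f := fun i : Fin (k*s) => (i : ℕ) % k)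
      rw [Finset.card_range]; omega
    have h2 : ¬ (Finset.range k ⊆ (univ.filter (fun i : Fin (k*s) => (e i : Fin n) ∈ B)).image
        (fun i : Fin (k*s) => (i : ℕ) % k)) :=
      fun h => absurd (Finset.card_le_card h) (by omega)
    obtain ⟨a, haR, haI⟩ := Finset.not_subset.mp h2
    refine ⟨a, Finset.mem_range.mp haR, fun i hi hmod => haI ?_⟩
    exact Finset.mem_image.mpr ⟨i, hi, hmod⟩
  have hidx : ∀ j, j < s → a + j * k < k * s := by
    intro j hj
    have h1 : j * k ≤ (s-1) * k := Nat.mul_le_mul_right _ (by omega)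
    have h2 : (s-1) * k + k = s * k := by
      have h3 : (s - 1) + 1 = s := by omega
      calc (s-1) * k + k = ((s-1)+1) * k := by ring
        _ = s * k := by rw [h3]
    have h4 : k * s = s * k := by ring
    omega
  refine ⟨fun j => g ⟨(a + j * k) % (k*s), Nat.mod_lt _ hm⟩, ?_, ?_, ?_, ?_⟩
  · intro j hj; exact hglt _
  · intro i j hij hj
    beta_reduce
    have hi : i < s := by omega
    have hia : (a + i * k) % (k*s) = a + i * k := Nat.mod_eq_of_lt (hidx i hi)
    have hja : (a + j * k) % (k*s) = a + j * k := Nat.mod_eq_of_lt (hidx j hj)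
    have hd : a + j * k = (a + i * k) + (j - i) * k := by
      have h1 : i + (j - i) = j := by omega
      have h2 : j * k = i * k + (j - i) * k := by
        calc j * k = (i + (j-i)) * k := by rw [h1]
          _ = i * k + (j - i) * k := by ring
      omega
    have h5 := strictMono_gap g hgmono ((j - i) * k)
      ⟨(a + i * k) % (k*s), Nat.mod_lt _ hm⟩ ⟨(a + j * k) % (k*s), Nat.mod_lt _ hm⟩
      (by show (a + j * k) % (k*s) = (a + i * k) % (k*s) + (j-i)*k; omega)
    have hk' : k ≤ (j - i) * k := by
      have h6 : 1 * k ≤ (j - i) * k := Nat.mul_le_mul_right _ (by omega)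
      omega
    omega
  · beta_reduce
    have hs1 : s - 1 < s := by omega
    have htop : (a + (s-1) * k) % (k*s) = a + (s-1) * k := Nat.mod_eq_of_lt (hidx _ hs1)
    have h0v : (a + 0 * k) % (k*s) = a := by
      have := hidx 0 hs
      rw [Nat.mod_eq_of_lt (by omega)]; ring_nf
    have hlast : k*s - 1 < k*s := by omega
    have hup := strictMono_gap g hgmono ((k*s - 1) - (a + (s-1)*k))
      ⟨(a + (s-1) * k) % (k*s), Nat.mod_lt _ hm⟩ ⟨k*s - 1, hlast⟩
      (by show k*s - 1 = (a + (s-1)*k) % (k*s) + ((k*s - 1) - (a + (s-1)*k))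
          have := hidx _ hs1; omega)
    have hlastlt : g ⟨k*s - 1, hlast⟩ < n := hglt _
    have hlow := strictMono_gap g hgmono a ⟨0 % (k*s), Nat.mod_lt _ hm⟩
      ⟨(a + 0 * k) % (k*s), Nat.mod_lt _ hm⟩
      (by show (a + 0*k) % (k*s) = 0 % (k*s) + a
          have : (0:ℕ) % (k*s) = 0 := Nat.zero_mod _
          omega)
    have hsk : (s-1) * k + k = s * k := by
      have h1 : (s - 1) + 1 = s := by omega
      calc (s-1) * k + k = ((s-1)+1) * k := by ring
        _ = s * k := by rw [h1]
    have hms : k * s = s * k := by ring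
    omega
  · intro j hj
    beta_reduce
    have hja : (a + j * k) % (k*s) = a + j * k := Nat.mod_eq_of_lt (hidx j hj)
    have hcast : ((g ⟨(a + j * k) % (k*s), Nat.mod_lt _ hm⟩ : ℕ) : Fin n)
        = (e ⟨(a + j * k) % (k*s), Nat.mod_lt _ hm⟩ : Fin n) := Fin.cast_val_eq_self _
    rw [hcast]
    intro hmem
    apply ha ⟨(a + j * k) % (k*s), Nat.mod_lt _ hm⟩
      (Finset.mem_filter.mpr ⟨Finset.mem_univ _, hmem⟩)
    show ((a + j * k) % (k*s)) % k = a
    rw [hja, Nat.add_mul_mod_self_right, Nat.mod_eq_of_lt ha_k]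

/-- `F` has no `s` pairwise disjoint members. -/
def NoMatching (F : Finset (Finset ℕ)) (s : ℕ) : Prop :=
  ∀ M ⊆ F, (M : Set (Finset ℕ)).PairwiseDisjoint id → M.card < s

lemma cycle_lemma (n k s t : ℕ) [NeZero n] (hk : 1 ≤ k) (hs : 1 ≤ s) (hn : n = k * s + t)
    (F : Finset (Finset ℕ)) (hν : NoMatching F s) (σ : Fin n ≃ Fin n) :
    k + t ≤ (Finset.univ.filter fun i => arcs n k σ i ∉ F).card := by
  by_contra hcon
  push_neg at hcon
  obtain ⟨y, hy1, hy2, hy3, hy4⟩ := cyclic_select n k s t hk hs hn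
    (Finset.univ.filter fun i => arcs n k σ i ∉ F) (by omega)
  have hmono : ∀ p q, p ≤ q → q < s → y p ≤ y q := by
    intro p q hpq hq
    rcases Nat.eq_or_lt_of_le hpq with h | h
    · rw [h]
    · have := hy2 p q h hq; omega
  have hinj : Function.Injective (fun x : Fin n => (σ x : ℕ) + 1) := by
    intro a b hab
    have hab' : (σ a : ℕ) + 1 = (σ b : ℕ) + 1 := hab
    exact σ.injective (Fin.ext (by omega))
  have hdisj : ∀ i j, i < j → j < s →
      Disjoint (arcs n k σ ((y i : Fin n))) (arcs n k σ ((y j : Fin n))) := by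
    intro i j hij hj
    rw [arcs, arcs]
    refine (Finset.disjoint_image hinj).mpr (win_disjoint _ _ (hy2 i j hij hj) ?_)
    have h1 : y j ≤ y (s - 1) := hmono j (s-1) (by omega) (by omega)
    have h2 : y 0 ≤ y i := hmono 0 i (by omega) (by omega)
    omega
  have harc_mem : ∀ j, j < s → arcs n k σ ((y j : Fin n)) ∈ F := by
    intro j hj
    have h := hy4 j hj
    by_contra hnot
    exact h (Finset.mem_filter.mpr ⟨Finset.mem_univ _, hnot⟩)
  have harc_ne : ∀ i, (arcs n k σ i).Nonempty := by
    intro i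
    obtain ⟨x, hx⟩ := win_nonempty (n := n) hk i
    exact ⟨(σ x : ℕ) + 1, Finset.mem_image.mpr ⟨x, hx, rfl⟩⟩
  set M : Finset (Finset ℕ) := (Finset.range s).image (fun j => arcs n k σ ((y j : Fin n))) with hM
  have hinj2 : Set.InjOn (fun j => arcs n k σ ((y j : Fin n))) (Finset.range s) := by
    intro i hi j hj hij
    rw [Finset.coe_range, Set.mem_Iio] at hi hj
    by_contra hne
    have hij' : arcs n k σ ((y i : Fin n)) = arcs n k σ ((y j : Fin n)) := hij
    rcases Nat.lt_or_ge i j with h | h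
    · have := hdisj i j h hj
      rw [hij'] at this
      rw [disjoint_self] at this
      exact absurd this (Finset.nonempty_iff_ne_empty.mp (harc_ne _))
    · have h' : j < i := by omega
      have := hdisj j i h' hi
      rw [hij'] at this
      rw [disjoint_self] at this
      exact absurd this (Finset.nonempty_iff_ne_empty.mp (harc_ne _))
  have hMcard : M.card = s := by
    rw [hM, Finset.card_image_of_injOn hinj2, Finset.card_range]
  have hMF : M ⊆ F := by
    intro S hS
    rw [hM, Finset.mem_image] at hS
    obtain ⟨j, hj, hjS⟩ := hS
    rw [Finset.mem_range] at hj
    rw [← hjS]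
    exact harc_mem j hj
  have hpd : (M : Set (Finset ℕ)).PairwiseDisjoint id := by
    intro S hS T hT hST
    rw [Finset.mem_coe, hM, Finset.mem_image] at hS hT
    obtain ⟨i, hi, hiS⟩ := hS
    obtain ⟨j, hj, hjT⟩ := hT
    rw [Finset.mem_range] at hi hj
    have hij : i ≠ j := by rintro rfl; rw [← hiS, ← hjT] at hST; exact hST rfl
    rcases Nat.lt_or_ge i j with h | h
    · rw [← hiS, ← hjT]; exact hdisj i j h hj
    · rw [← hiS, ← hjT]; exact (hdisj j i (by omega) hi).symm
  have := hν M hMF hpd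
  omega

section Count
variable {n k : ℕ} [NeZero n]

/-- Positions of `Fin n` whose label lies in `S`. -/
private def TS (n : ℕ) [NeZero n] (S : Finset ℕ) : Finset (Fin n) :=
  Finset.univ.filter fun z : Fin n => (z : ℕ) + 1 ∈ S

lemma TS_card (S : Finset ℕ) (hS : S ∈ (Finset.Icc 1 n).powersetCard k) :
    (TS n S).card = k := by
  obtain ⟨hsub, hcard⟩ := Finset.mem_powersetCard.mp hS
  have himg : (TS n S).image (fun z : Fin n => (z : ℕ) + 1) = S := by
    ext w
    simp only [Finset.mem_image, TS, Finset.mem_filter, Finset.mem_univ, true_and]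
    constructor
    · rintro ⟨z, hz, rfl⟩; exact hz
    · intro hw
      have hw' := Finset.mem_Icc.mp (hsub hw)
      refine ⟨⟨w - 1, by omega⟩, ?_, by simp; omega⟩
      show (w - 1) + 1 ∈ S
      have h : (w - 1) + 1 = w := by omega
      rwa [h]
  calc (TS n S).card
      = ((TS n S).image (fun z : Fin n => (z : ℕ) + 1)).card :=
        (Finset.card_image_of_injOn (fun a _ b _ hab => Fin.ext (by omega))).symm
    _ = S.card := by rw [himg]
    _ = k := hcard

lemma arcs_eq_iff (hk : k ≤ n) (σ : Fin n ≃ Fin n) (i : Fin n) (S : Finset ℕ)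
    (hS : S ∈ (Finset.Icc 1 n).powersetCard k) :
    arcs n k σ i = S ↔ ∀ x ∈ win n k i, σ x ∈ TS n S := by
  have hmem : ∀ z : Fin n, z ∈ TS n S ↔ (z : ℕ) + 1 ∈ S := by
    intro z; rw [TS, Finset.mem_filter]; simp
  constructor
  · intro h x hx
    rw [hmem]
    rw [← h]
    exact Finset.mem_image_of_mem _ hx
  · intro h
    have hsub : arcs n k σ i ⊆ S := by
      rw [arcs]
      exact Finset.image_subset_iff.mpr (fun x hx => (hmem _).mp (h x hx))
    apply Finset.eq_of_subset_of_card_le hsub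
    rw [card_arcs hk, (Finset.mem_powersetCard.mp hS).2]

lemma arcs_count_eq (hk : k ≤ n) (S1 S2 : Finset ℕ)
    (h1 : S1 ∈ (Finset.Icc 1 n).powersetCard k) (h2 : S2 ∈ (Finset.Icc 1 n).powersetCard k) :
    (Finset.univ.filter fun p : (Fin n ≃ Fin n) × Fin n => arcs n k p.1 p.2 = S1).card =
    (Finset.univ.filter fun p : (Fin n ≃ Fin n) × Fin n => arcs n k p.1 p.2 = S2).card := by
  classical
  have hcc : (TS n S1).card = (TS n S2).card := by rw [TS_card S1 h1, TS_card S2 h2]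
  have hccc : ((TS n S1)ᶜ : Finset (Fin n)).card = ((TS n S2)ᶜ : Finset (Fin n)).card := by
    rw [Finset.card_compl, Finset.card_compl, hcc]
  let eA : {x // x ∈ TS n S1} ≃ {x // x ∈ TS n S2} := Finset.equivOfCardEq hcc
  let eB : {x // ¬ x ∈ TS n S1} ≃ {x // ¬ x ∈ TS n S2} :=
    ((Equiv.subtypeEquivRight (fun x => (Finset.mem_compl (s := TS n S1)).symm)).trans
      (Finset.equivOfCardEq hccc)).trans
      (Equiv.subtypeEquivRight (fun x => Finset.mem_compl (s := TS n S2)))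
  let g : Fin n ≃ Fin n :=
    (Equiv.sumCompl (· ∈ TS n S1)).symm.trans ((eA.sumCongr eB).trans (Equiv.sumCompl (· ∈ TS n S2)))
  have hg : ∀ z : Fin n, z ∈ TS n S1 ↔ g z ∈ TS n S2 := by
    intro z
    by_cases hz : z ∈ TS n S1
    · have hgz : g z = (eA ⟨z, hz⟩ : Fin n) := by
        show (Equiv.sumCompl (· ∈ TS n S2)) ((eA.sumCongr eB) ((Equiv.sumCompl (· ∈ TS n S1)).symm z)) = _
        rw [Equiv.sumCompl_symm_apply_of_pos hz]
        rfl
      simp only [hz, true_iff, hgz]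
      exact (eA ⟨z, hz⟩).2
    · have hgz : g z = (eB ⟨z, hz⟩ : Fin n) := by
        show (Equiv.sumCompl (· ∈ TS n S2)) ((eA.sumCongr eB) ((Equiv.sumCompl (· ∈ TS n S1)).symm z)) = _
        rw [Equiv.sumCompl_symm_apply_of_neg hz]
        rfl
      simp only [hz, false_iff, hgz]
      exact (eB ⟨z, hz⟩).2
  have hg' : ∀ z : Fin n, z ∈ TS n S2 ↔ g.symm z ∈ TS n S1 := by
    intro z
    rw [hg (g.symm z), Equiv.apply_symm_apply]
  have key : ∀ (σ : Fin n ≃ Fin n) (i : Fin n), arcs n k σ i = S1 ↔ arcs n k (σ.trans g) i = S2 := by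
    intro σ i
    rw [arcs_eq_iff hk σ i S1 h1, arcs_eq_iff hk (σ.trans g) i S2 h2]
    constructor
    · intro h x hx
      exact (hg _).mp (h x hx)
    · intro h x hx
      exact (hg _).mpr (h x hx)
  refine Finset.card_bij' (fun p _ => (p.1.trans g, p.2)) (fun p _ => (p.1.trans g.symm, p.2)) ?_ ?_ ?_ ?_
  · intro p hp
    rw [Finset.mem_filter] at hp ⊢
    exact ⟨Finset.mem_univ _, (key p.1 p.2).mp hp.2⟩
  · intro p hp
    rw [Finset.mem_filter] at hp ⊢
    refine ⟨Finset.mem_univ _, ?_⟩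
    rw [key (p.1.trans g.symm) p.2]
    have : (p.1.trans g.symm).trans g = p.1 := by
      ext x; simp
    rw [this]
    exact hp.2
  · intro p _
    apply Prod.ext
    · show (p.1.trans g).trans g.symm = p.1
      ext x; simp
    · rfl
  · intro p _
    apply Prod.ext
    · show (p.1.trans g.symm).trans g = p.1
      ext x; simp
    · rfl

end Count

/-- If `n = ks + t` then a family of `k`-subsets of `[n]` with no `s` pairwise
disjoint members misses at least `(1 + t/k)·C(n-1,k-1)` of the `k`-subsets
(stated multiplied through by `k`). -/
theorem stmt6 (n k s t : ℕ) (hk : 1 ≤ k) (hn : n = k * s + t)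
    (F : Finset (Finset ℕ)) (hF : F ⊆ (Finset.Icc 1 n).powersetCard k)
    (hν : NoMatching F s) :
    (k + t) * Nat.choose (n - 1) (k - 1) ≤ k * (Nat.choose n k - F.card) := by
  classical
  have hs : 1 ≤ s := by
    have h := hν ∅ (Finset.empty_subset F) (by simp)
    simp at h; omega
  haveI : NeZero n := ⟨by have := Nat.mul_pos hk hs; omega⟩
  have hkn : k ≤ n := by
    have h1 : k * 1 ≤ k * s := Nat.mul_le_mul_left k hs
    omega
  have hn1 : 1 ≤ n := by omega
  -- notation
  set PP : ℕ := Fintype.card (Fin n ≃ Fin n) with hPP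
  have hPPpos : 0 < PP := Fintype.card_pos
  have hpkc_card : ((Finset.Icc 1 n).powersetCard k).card = n.choose k := by
    rw [Finset.card_powersetCard, Nat.card_Icc]
    norm_num
  obtain ⟨S₀, hS₀⟩ : ((Finset.Icc 1 n).powersetCard k).Nonempty := by
    rw [← Finset.card_pos, hpkc_card]
    exact Nat.choose_pos hkn
  set c : ℕ := (Finset.univ.filter fun p : (Fin n ≃ Fin n) × Fin n => arcs n k p.1 p.2 = S₀).card
    with hc
  -- total double count : choose n k * c = PP * n
  have htotal : n.choose k * c = PP * n := by
    have h5 : (Finset.univ : Finset ((Fin n ≃ Fin n) × Fin n)).card =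
        ∑ S ∈ (Finset.Icc 1 n).powersetCard k,
          (Finset.univ.filter fun p : (Fin n ≃ Fin n) × Fin n => arcs n k p.1 p.2 = S).card :=
      Finset.card_eq_sum_card_fiberwise (fun p _ => arcs_mem_powersetCard hkn p.1 p.2)
    have h6 : ∑ S ∈ (Finset.Icc 1 n).powersetCard k,
          (Finset.univ.filter fun p : (Fin n ≃ Fin n) × Fin n => arcs n k p.1 p.2 = S).card =
        ∑ _S ∈ (Finset.Icc 1 n).powersetCard k, c :=
      Finset.sum_congr rfl (fun S hS => arcs_count_eq hkn S S₀ hS hS₀)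
    have h7 : (Finset.univ : Finset ((Fin n ≃ Fin n) × Fin n)).card = PP * n := by
      rw [Finset.card_univ, Fintype.card_prod, Fintype.card_fin]
    rw [h7, h6, Finset.sum_const, smul_eq_mul, hpkc_card] at h5
    omega
  -- the missing sets
  set Miss : Finset (Finset ℕ) := (Finset.Icc 1 n).powersetCard k \ F with hMiss
  have hMcard : Miss.card = n.choose k - F.card := by
    rw [hMiss, Finset.card_sdiff_of_subset hF, hpkc_card]
  -- missing double count
  have hmiss : Miss.card * c =
      (Finset.univ.filter fun p : (Fin n ≃ Fin n) × Fin n => arcs n k p.1 p.2 ∉ F).card := by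
    have h5 : (Finset.univ.filter fun p : (Fin n ≃ Fin n) × Fin n => arcs n k p.1 p.2 ∉ F).card =
        ∑ S ∈ Miss, ((Finset.univ.filter fun p : (Fin n ≃ Fin n) × Fin n =>
          arcs n k p.1 p.2 ∉ F).filter fun p => arcs n k p.1 p.2 = S).card := by
      apply Finset.card_eq_sum_card_fiberwise
      intro p hp
      rw [Finset.mem_coe, Finset.mem_filter] at hp
      rw [Finset.mem_coe, hMiss, Finset.mem_sdiff]
      exact ⟨arcs_mem_powersetCard hkn p.1 p.2, hp.2⟩
    have h6 : ∀ S ∈ Miss, ((Finset.univ.filter fun p : (Fin n ≃ Fin n) × Fin n =>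
          arcs n k p.1 p.2 ∉ F).filter fun p => arcs n k p.1 p.2 = S).card =
        (Finset.univ.filter fun p : (Fin n ≃ Fin n) × Fin n => arcs n k p.1 p.2 = S).card := by
      intro S hS
      rw [hMiss, Finset.mem_sdiff] at hS
      congr 1
      rw [Finset.filter_filter]
      apply Finset.filter_congr
      intro p _
      constructor
      · rintro ⟨_, h⟩; exact h
      · intro h; exact ⟨by rw [h]; exact hS.2, h⟩
    have h7 : ∀ S ∈ Miss, (Finset.univ.filter fun p : (Fin n ≃ Fin n) × Fin n =>
          arcs n k p.1 p.2 = S).card = c := by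
      intro S hS
      rw [hMiss, Finset.mem_sdiff] at hS
      exact arcs_count_eq hkn S S₀ hS.1 hS₀
    rw [h5, Finset.sum_congr rfl h6, Finset.sum_congr rfl h7, Finset.sum_const, smul_eq_mul]
  -- lower bound from the cycle lemma
  have hlow : PP * (k + t) ≤
      (Finset.univ.filter fun p : (Fin n ≃ Fin n) × Fin n => arcs n k p.1 p.2 ∉ F).card := by
    have h5 : (Finset.univ.filter fun p : (Fin n ≃ Fin n) × Fin n => arcs n k p.1 p.2 ∉ F).card =
        ∑ σ ∈ (Finset.univ : Finset (Fin n ≃ Fin n)),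
          ((Finset.univ.filter fun p : (Fin n ≃ Fin n) × Fin n =>
            arcs n k p.1 p.2 ∉ F).filter fun p => p.1 = σ).card :=
      Finset.card_eq_sum_card_fiberwise (fun p _ => Finset.mem_univ _)
    have h6 : ∀ σ : Fin n ≃ Fin n, ((Finset.univ.filter fun p : (Fin n ≃ Fin n) × Fin n =>
          arcs n k p.1 p.2 ∉ F).filter fun p => p.1 = σ).card =
        (Finset.univ.filter fun i : Fin n => arcs n k σ i ∉ F).card := by
      intro σ
      refine Finset.card_bij' (fun p _ => p.2) (fun i _ => (σ, i)) ?_ ?_ ?_ ?_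
      · intro p hp
        rw [Finset.filter_filter, Finset.mem_filter] at hp
        rw [Finset.mem_filter]
        refine ⟨Finset.mem_univ _, ?_⟩
        show arcs n k σ p.2 ∉ F
        have h2 := hp.2.2
        rw [← h2]
        exact hp.2.1
      · intro i hi
        rw [Finset.mem_filter] at hi
        rw [Finset.filter_filter, Finset.mem_filter]
        exact ⟨Finset.mem_univ _, hi.2, rfl⟩
      · intro p hp
        rw [Finset.filter_filter, Finset.mem_filter] at hp
        show (σ, p.2) = p
        have h2 := hp.2.2
        rw [← h2]
      · intro i _
        rfl
    rw [h5, Finset.sum_congr rfl (fun σ _ => h6 σ)]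
    calc PP * (k + t) = ∑ _σ ∈ (Finset.univ : Finset (Fin n ≃ Fin n)), (k + t) := by
          rw [Finset.sum_const, smul_eq_mul, Finset.card_univ]
      _ ≤ _ := Finset.sum_le_sum (fun σ _ => cycle_lemma n k s t hk hs hn F hν σ)
  -- put the counts together
  have hYn : (k + t) * n.choose k ≤ Miss.card * n := by
    have h8 : PP * (k + t) * n.choose k ≤ Miss.card * c * n.choose k := by
      apply Nat.mul_le_mul_right
      rw [hmiss]
      exact hlow
    have h9 : Miss.card * c * n.choose k = Miss.card * (PP * n) := by
      rw [← htotal]; ring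
    rw [h9] at h8
    have h10 : PP * ((k + t) * n.choose k) ≤ PP * (Miss.card * n) := by
      calc PP * ((k + t) * n.choose k) = PP * (k + t) * n.choose k := by ring
        _ ≤ Miss.card * (PP * n) := h8
        _ = PP * (Miss.card * n) := by ring
    exact Nat.le_of_mul_le_mul_left h10 hPPpos
  -- the binomial identity  k * C(n,k) = n * C(n-1,k-1)
  have hbinom : k * n.choose k = n * (n - 1).choose (k - 1) := by
    have h := Nat.add_one_mul_choose_eq (n - 1) (k - 1)
    have h1 : n - 1 + 1 = n := by omega
    have h2 : k - 1 + 1 = k := by omega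
    rw [h1, h2] at h
    rw [mul_comm k (n.choose k)]
    exact h.symm
  have hfinal : n * ((k + t) * (n - 1).choose (k - 1)) ≤ n * (k * Miss.card) := by
    calc n * ((k + t) * (n - 1).choose (k - 1))
        = (k + t) * (n * (n - 1).choose (k - 1)) := by ring
      _ = (k + t) * (k * n.choose k) := by rw [hbinom]
      _ = k * ((k + t) * n.choose k) := by ring
      _ ≤ k * (Miss.card * n) := Nat.mul_le_mul_left _ hYn
      _ = n * (k * Miss.card) := by ring
  have := Nat.le_of_mul_le_mul_left hfinal (by omega : 0 < n)
  rw [hMcard] at this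
  exact this
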